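/- In the constrained half-Θ_6-graph, if u and v are mutually visible vertices with v in a positive subcone C_{i,j} of u, and there exists a vertex x in the same subcone C_{i,j}^u visible to u with projection on the bisector of C_i^u closer to u than that of v, then there exists a vertex y visible to both u and v, lying in C_i^u, whose projection on the bisector is strictly closer to u than v's projection. -/

import Mathlib

open scoped Real
noncomputable section

/-- Points in the Euclidean plane. -/
abbrev Pt : Type := EuclideanSpace ℝ (Fin 2)

/-- Two closed segments `ab` and `cd` properly intersect: their relative
interiors (open segments) share a point. -/
def ProperInter (a b c d : Pt) : Prop :=
  (openSegment ℝ a b ∩ openSegment ℝ c d).Nonempty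

/-- `uv` (in either orientation) is one of the constraints in `S`. -/
def IsConstraintOf (S : Set (Pt × Pt)) (u v : Pt) : Prop := (u, v) ∈ S ∨ (v, u) ∈ S

/-- `u` and `v` are visible with respect to the constraint set `S`:
either `uv` is itself a constraint, or the segment `uv` does not properly
intersect any constraint. -/
def Visible (S : Set (Pt × Pt)) (u v : Pt) : Prop :=
  IsConstraintOf S u v ∨ ∀ c ∈ S, ¬ ProperInter u v c.1 c.2

/-- The constraints have endpoints in `P` and no two of them properly intersect. -/
def ValidConstraints (P : Finset Pt) (S : Set (Pt × Pt)) : Prop :=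
  (∀ c ∈ S, c.1 ∈ P ∧ c.2 ∈ P ∧ c.1 ≠ c.2) ∧
  (∀ c ∈ S, ∀ c' ∈ S, c ≠ c' → c ≠ (c'.2, c'.1) → ¬ ProperInter c.1 c.2 c'.1 c'.2)

/-- A list of points is a path in the (symmetric) edge set `E`. -/
def IsPathIn (E : Set (Pt × Pt)) (p : List Pt) : Prop :=
  List.Chain' (fun a b => (a, b) ∈ E ∨ (b, a) ∈ E) p

/-- Euclidean length of a polygonal path given by a list of points. -/
def pathLen : List Pt → ℝ
  | a :: b :: r => dist a b + pathLen (b :: r)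
  | _ => 0

/-- Shortest-path distance between `s` and `t` in the edge set `E`
(with Euclidean edge weights). -/
def sdist (E : Set (Pt × Pt)) (s t : Pt) : ℝ :=
  sInf { L | ∃ p : List Pt, IsPathIn E p ∧ p.head? = some s ∧
              p.getLast? = some t ∧ pathLen p = L }
/-- Make a point from coordinates. -/
def pt (x y : ℝ) : Pt := (WithLp.equiv 2 (Fin 2 → ℝ)).symm ![x, y]

/-- Planar dot product. -/
def dotp (a b : Pt) : ℝ := a 0 * b 0 + a 1 * b 1

/-- Planar cross product. -/
def crossp (a b : Pt) : ℝ := a 0 * b 1 - a 1 * b 0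

/-- Unit bisector vectors of the three positive cones `C₀, C₁, C₂` of the
(half-)`Θ₆` construction: `C₀` is bisected by the upward vertical ray and the
cones proceed clockwise at 120° intervals. -/
def bis : Fin 3 → Pt
  | 0 => pt 0 1
  | 1 => pt (Real.sqrt 3 / 2) (-(1 / 2))
  | 2 => pt (-(Real.sqrt 3 / 2)) (-(1 / 2))

/-- Signed projection distance of `p` onto the bisector of the cone `Cᵢ` of `u`. -/
def projB (i : Fin 3) (u p : Pt) : ℝ := dotp (bis i) (p - u)

/-- `p` lies in the positive cone `Cᵢᵘ`: a closed cone of half-angle 30°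
around the bisector `bis i` with apex `u`. -/
def inPosCone (i : Fin 3) (u p : Pt) : Prop :=
  p ≠ u ∧ Real.sqrt 3 / 2 * dist u p ≤ projB i u p

/-- The direction of `w` from `u` lies strictly (angularly) between the
directions of `v` and `x` from `u`. -/
def StrictlyBetween (u v w x : Pt) : Prop :=
  (0 < crossp (v - u) (w - u) ∧ 0 < crossp (w - u) (x - u)) ∨
  (crossp (v - u) (w - u) < 0 ∧ crossp (w - u) (x - u) < 0)

/-- `v` and `x` lie in the same subcone of the cone `Cᵢᵘ`: both lie in the cone
and no constraint incident to `u` separates them angularly. -/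
def SameSubcone (S : Set (Pt × Pt)) (u : Pt) (i : Fin 3) (v x : Pt) : Prop :=
  inPosCone i u v ∧ inPosCone i u x ∧
  ∀ w : Pt, IsConstraintOf S u w → ¬ StrictlyBetween u v w x

/-- General position: no three points collinear, distinct points project
distinctly onto each cone bisector, and no point lies on a boundary ray of a
cone of another point. -/
def GenPos (P : Finset Pt) : Prop :=
  (∀ a ∈ P, ∀ b ∈ P, ∀ c ∈ P, a ≠ b → b ≠ c → a ≠ c → crossp (b - a) (c - a) ≠ 0) ∧
  (∀ u ∈ P, ∀ a ∈ P, ∀ b ∈ P, a ≠ b → ∀ i : Fin 3, projB i u a ≠ projB i u b) ∧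
  (∀ a ∈ P, ∀ b ∈ P, a ≠ b → ∀ i : Fin 3, Real.sqrt 3 / 2 * dist a b ≠ projB i a b)

/-- `uv` is an edge of the constrained half-`Θ₆`-graph on `P` with constraints
`S`: `v` lies in a positive (sub)cone of `u`, is visible to `u`, and among the
visible vertices of that subcone its projection onto the cone bisector is
closest to `u`. -/
def HalfTheta6Edge (P : Finset Pt) (S : Set (Pt × Pt)) (u v : Pt) : Prop :=
  v ∈ P ∧ ∃ i : Fin 3, inPosCone i u v ∧ Visible S u v ∧
    ∀ w ∈ P, w ≠ u → SameSubcone S u i v w → Visible S u w →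
      projB i u v ≤ projB i u w


/-! ### Auxiliary development -/

/-- Strict interior of the triangle `ABC` (as an open convex combination). -/
def InTri (A B C w : Pt) : Prop :=
  ∃ a b c : ℝ, 0 < a ∧ 0 < b ∧ 0 < c ∧ a + b + c = 1 ∧ w = a • A + b • B + c • C

namespace CVV

lemma pt_apply_add (a b : Pt) (i : Fin 2) : (a + b) i = a i + b i := rfl
lemma pt_apply_sub (a b : Pt) (i : Fin 2) : (a - b) i = a i - b i := rfl
lemma pt_apply_smul (t : ℝ) (a : Pt) (i : Fin 2) : (t • a) i = t * a i := rfl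
lemma crossp_expand (a b : Pt) : crossp a b = a 0 * b 1 - a 1 * b 0 := rfl
lemma dotp_expand (a b : Pt) : dotp a b = a 0 * b 0 + a 1 * b 1 := rfl

lemma cramer (p q w : Pt) (h : crossp p q ≠ 0) :
    w = (crossp w q / crossp p q) • p + (crossp p w / crossp p q) • q := by
  ext i
  have h2 : (((crossp w q / crossp p q) • p + (crossp p w / crossp p q) • q) : Pt) i
      = (crossp w q / crossp p q) * p i + (crossp p w / crossp p q) * q i := rfl
  rw [h2]
  fin_cases i <;>
  · simp only [crossp_expand, Fin.zero_eta, Fin.mk_one] at h ⊢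
    rw [div_mul_eq_mul_div, div_mul_eq_mul_div, ← add_div, eq_div_iff h]
    ring

lemma combo_sub (a b c : ℝ) (A B C : Pt) (h : a + b + c = 1) :
    a • A + b • B + c • C - A = b • (B - A) + c • (C - A) := by
  have ha : a = 1 - b - c := by linarith
  subst ha
  rw [sub_smul, sub_smul, one_smul, smul_sub, smul_sub]
  abel

lemma combo_subB (a b c : ℝ) (A B C : Pt) (h : a + b + c = 1) :
    a • A + b • B + c • C - B = a • (A - B) + c • (C - B) := by
  have hb : b = 1 - a - c := by linarith
  subst hb
  rw [sub_smul, sub_smul, one_smul, smul_sub, smul_sub]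
  abel

lemma crossp_lin (r s : ℝ) (x y z : Pt) :
    crossp (r • x + s • y) z = r * crossp x z + s * crossp y z := by
  simp only [crossp, pt_apply_add, pt_apply_smul]; ring

lemma crossp_lin' (r s : ℝ) (x y z : Pt) :
    crossp z (r • x + s • y) = r * crossp z x + s * crossp z y := by
  simp only [crossp, pt_apply_add, pt_apply_smul]; ring

lemma crossp_self (x : Pt) : crossp x x = 0 := by simp only [crossp]; ring
lemma crossp_smul_self (t : ℝ) (x : Pt) : crossp x (t • x) = 0 := by
  simp only [crossp, pt_apply_smul]; ring
lemma crossp_anticomm (x y : Pt) : crossp x y = - crossp y x := by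
  simp only [crossp]; ring
lemma crossp_zero_left (x : Pt) : crossp 0 x = 0 := by
  have h0 : (0 : Pt) 0 = 0 := rfl
  have h1 : (0 : Pt) 1 = 0 := rfl
  simp only [crossp, h0, h1]; ring
lemma crossp_zero_right (x : Pt) : crossp x 0 = 0 := by
  have h0 : (0 : Pt) 0 = 0 := rfl
  have h1 : (0 : Pt) 1 = 0 := rfl
  simp only [crossp, h0, h1]; ring

/-- affine evaluation of a cross-product side function along a parametrized segment -/
lemma cr_affine (v F p q : Pt) (t : ℝ) :
    crossp v ((p + t • (q - p)) - F)
      = (1 - t) * crossp v (p - F) + t * crossp v (q - F) := by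
  simp only [crossp, pt_apply_add, pt_apply_sub, pt_apply_smul]; ring

/-! #### segments -/

lemma mem_open_iff (z a b : Pt) :
    z ∈ openSegment ℝ a b ↔ ∃ t : ℝ, 0 < t ∧ t < 1 ∧ z = a + t • (b - a) := by
  rw [openSegment_eq_image']
  constructor
  · rintro ⟨t, ⟨h1, h2⟩, rfl⟩; exact ⟨t, h1, h2, rfl⟩
  · rintro ⟨t, h1, h2, rfl⟩; exact ⟨t, ⟨h1, h2⟩, rfl⟩

lemma mem_seg_iff (z a b : Pt) :
    z ∈ segment ℝ a b ↔ ∃ t : ℝ, 0 ≤ t ∧ t ≤ 1 ∧ z = a + t • (b - a) := by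
  rw [segment_eq_image']
  constructor
  · rintro ⟨t, ⟨h1, h2⟩, rfl⟩; exact ⟨t, h1, h2, rfl⟩
  · rintro ⟨t, h1, h2, rfl⟩; exact ⟨t, ⟨h1, h2⟩, rfl⟩

lemma seg_cases {z a b : Pt} (h : z ∈ segment ℝ a b) :
    z = a ∨ z = b ∨ z ∈ openSegment ℝ a b := by
  rw [mem_seg_iff] at h
  obtain ⟨t, h0, h1, rfl⟩ := h
  rcases eq_or_lt_of_le h0 with h0' | h0'
  · left; rw [← h0']; simp
  rcases eq_or_lt_of_le h1 with h1' | h1'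
  · right; left; rw [h1', one_smul]; abel
  · right; right; exact (mem_open_iff _ _ _).2 ⟨t, h0', h1', rfl⟩

lemma share {z a b c : Pt} (h1 : z ∈ openSegment ℝ a b) (h2 : z ∈ openSegment ℝ a c) :
    crossp (b - a) (c - a) = 0 := by
  rw [mem_open_iff] at h1 h2
  obtain ⟨s, hs0, _, hz⟩ := h1
  obtain ⟨t, ht0, _, hz'⟩ := h2
  have h : s • (b - a) = t • (c - a) := by
    have h' : a + s • (b - a) - a = a + t • (c - a) - a := by rw [← hz, ← hz']
    simpa using h'
  have h2 : crossp (s • (b - a)) (c - a) = crossp (t • (c - a)) (c - a) := by rw [h]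
  have e1 : crossp (s • (b - a)) (c - a) = s * crossp (b - a) (c - a) := by
    simp [crossp, pt_apply_smul]; ring
  have e2 : crossp (t • (c - a)) (c - a) = 0 := by simp [crossp, pt_apply_smul]; ring
  rw [e1, e2] at h2
  exact (mul_eq_zero.1 h2).resolve_left (ne_of_gt hs0)

lemma open_collinear {z a b : Pt} (h : z ∈ openSegment ℝ a b) :
    crossp (b - a) (z - a) = 0 := by
  rw [mem_open_iff] at h
  obtain ⟨t, _, _, rfl⟩ := h
  have : a + t • (b - a) - a = t • (b - a) := by abel
  rw [this]
  exact crossp_smul_self t (b - a)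

lemma open_sub {q a b : Pt} (h : q ∈ openSegment ℝ a b) :
    openSegment ℝ q b ⊆ openSegment ℝ a b := by
  rw [mem_open_iff] at h
  obtain ⟨s, hs0, hs1, rfl⟩ := h
  intro z hz
  rw [mem_open_iff] at hz ⊢
  obtain ⟨t, ht0, ht1, rfl⟩ := hz
  refine ⟨s + t * (1 - s), by nlinarith, by nlinarith, ?_⟩
  have hb : b - (a + s • (b - a)) = (1 - s) • (b - a) := by
    rw [sub_smul, one_smul]; abel
  rw [hb, smul_smul, add_assoc, ← add_smul]

lemma open_sub_endpoint {q e : Pt} {c : Pt × Pt} (hq : q ∈ openSegment ℝ c.1 c.2)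
    (he : e = c.1 ∨ e = c.2) : openSegment ℝ q e ⊆ openSegment ℝ c.1 c.2 := by
  rcases he with rfl | rfl
  · have hq' : q ∈ openSegment ℝ c.2 c.1 := by rwa [openSegment_symm] at hq
    intro z hz
    have h2 := open_sub hq' hz
    rwa [openSegment_symm] at h2
  · exact open_sub hq

lemma not_left_mem_open {a b : Pt} (h : a ≠ b) : a ∉ openSegment ℝ a b := by
  rw [left_mem_openSegment_iff]; exact h
lemma not_right_mem_open {a b : Pt} (h : a ≠ b) : b ∉ openSegment ℝ a b := by
  rw [right_mem_openSegment_iff]; exact fun he => h he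

lemma straddle' {X1 X2 t : ℝ} (h : (1 - t) * X1 + t * X2 = 0) (h1 : 0 < t) (h2 : t < 1)
    (hX1 : X1 ≠ 0) : X1 * X2 < 0 := by
  rcases lt_trichotomy X1 0 with hx | hx | hx
  · have hX2 : 0 < X2 := by
      by_contra hh
      push_neg at hh
      nlinarith
    exact mul_neg_of_neg_of_pos hx hX2
  · exact absurd hx hX1
  · have hX2 : X2 < 0 := by
      by_contra hh
      push_neg at hh
      nlinarith
    exact mul_neg_of_pos_of_neg hx hX2

/-! #### barycentric coordinates -/

def coB (A B C w : Pt) : ℝ := crossp (w - A) (C - A) / crossp (B - A) (C - A)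
def coC (A B C w : Pt) : ℝ := crossp (B - A) (w - A) / crossp (B - A) (C - A)
def coA (A B C w : Pt) : ℝ := 1 - coB A B C w - coC A B C w

lemma co_sum (A B C w : Pt) : coA A B C w + coB A B C w + coC A B C w = 1 := by
  unfold coA; ring

lemma recon (A B C w : Pt) (hD : crossp (B - A) (C - A) ≠ 0) :
    w - A = coB A B C w • (B - A) + coC A B C w • (C - A) :=
  cramer (B - A) (C - A) (w - A) hD

lemma recon' (A B C w : Pt) (hD : crossp (B - A) (C - A) ≠ 0) :
    w = coA A B C w • A + coB A B C w • B + coC A B C w • C := by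
  have h := recon A B C w hD
  have h1 : coA A B C w • A + coB A B C w • B + coC A B C w • C - A
      = coB A B C w • (B - A) + coC A B C w • (C - A) :=
    combo_sub _ _ _ A B C (co_sum A B C w)
  have h2 : coA A B C w • A + coB A B C w • B + coC A B C w • C - A = w - A := by
    rw [h1, ← h]
  exact (sub_left_inj.mp h2).symm

/-- decomposition of `w - B` -/
lemma reconB (A B C w : Pt) (hD : crossp (B - A) (C - A) ≠ 0) :
    w - B = coA A B C w • (A - B) + coC A B C w • (C - B) := by
  have h := recon' A B C w hD
  calc w - B = coA A B C w • A + coB A B C w • B + coC A B C w • C - B := by rw [← h]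
  _ = _ := combo_subB _ _ _ A B C (by have := co_sum A B C w; linarith)

lemma coB_affine (A B C p q : Pt) (t : ℝ) :
    coB A B C (p + t • (q - p)) = (1 - t) * coB A B C p + t * coB A B C q := by
  unfold coB
  have h : crossp (p + t • (q - p) - A) (C - A)
      = (1 - t) * crossp (p - A) (C - A) + t * crossp (q - A) (C - A) := by
    simp only [crossp_expand, pt_apply_add, pt_apply_sub, pt_apply_smul]; ring
  rw [h, add_div, mul_div_assoc, mul_div_assoc]

lemma coC_affine (A B C p q : Pt) (t : ℝ) :
    coC A B C (p + t • (q - p)) = (1 - t) * coC A B C p + t * coC A B C q := by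
  unfold coC
  have h : crossp (B - A) (p + t • (q - p) - A)
      = (1 - t) * crossp (B - A) (p - A) + t * crossp (B - A) (q - A) := by
    simp only [crossp_expand, pt_apply_add, pt_apply_sub, pt_apply_smul]; ring
  rw [h, add_div, mul_div_assoc, mul_div_assoc]

lemma coA_affine (A B C p q : Pt) (t : ℝ) :
    coA A B C (p + t • (q - p)) = (1 - t) * coA A B C p + t * coA A B C q := by
  unfold coA; rw [coB_affine, coC_affine]; ring

lemma coB_A (A B C : Pt) : coB A B C A = 0 := by
  simp [coB, sub_self, crossp_zero_left]
lemma coC_A (A B C : Pt) : coC A B C A = 0 := by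
  simp [coC, sub_self, crossp_zero_right]
lemma coA_A (A B C : Pt) : coA A B C A = 1 := by simp [coA, coB_A, coC_A]
lemma coB_B (A B C : Pt) (hD : crossp (B - A) (C - A) ≠ 0) : coB A B C B = 1 :=
  div_self hD
lemma coC_B (A B C : Pt) : coC A B C B = 0 := by simp [coC, crossp_self]
lemma coA_B (A B C : Pt) (hD : crossp (B - A) (C - A) ≠ 0) : coA A B C B = 0 := by
  simp [coA, coB_B A B C hD, coC_B]
lemma coC_C (A B C : Pt) (hD : crossp (B - A) (C - A) ≠ 0) : coC A B C C = 1 :=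
  div_self hD
lemma coB_C (A B C : Pt) : coB A B C C = 0 := by simp [coB, crossp_self]
lemma coA_C (A B C : Pt) (hD : crossp (B - A) (C - A) ≠ 0) : coA A B C C = 0 := by
  simp [coA, coB_C, coC_C A B C hD]

lemma co_of_inTri {A B C w : Pt} (hD : crossp (B - A) (C - A) ≠ 0)
    (h : InTri A B C w) :
    0 < coA A B C w ∧ 0 < coB A B C w ∧ 0 < coC A B C w := by
  obtain ⟨a, b, c, ha, hb, hc, hsum, rfl⟩ := h
  have hsub := combo_sub a b c A B C hsum
  have hB : coB A B C (a • A + b • B + c • C) = b := by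
    unfold coB
    rw [hsub, crossp_lin]
    rw [crossp_self, mul_zero, add_zero]
    field_simp
  have hC : coC A B C (a • A + b • B + c • C) = c := by
    unfold coC
    have h2 : crossp (B - A) (b • (B - A) + c • (C - A))
        = b * crossp (B - A) (B - A) + c * crossp (B - A) (C - A) := by
      simp only [crossp_expand, pt_apply_add, pt_apply_smul, pt_apply_sub]; ring
    rw [hsub, h2, crossp_self, mul_zero, zero_add]
    field_simp
  have hA : coA A B C (a • A + b • B + c • C) = a := by
    unfold coA; rw [hB, hC]; linarith
  rw [hA, hB, hC]; exact ⟨ha, hb, hc⟩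

lemma inTri_of_co {A B C w : Pt} (hD : crossp (B - A) (C - A) ≠ 0)
    (hA : 0 < coA A B C w) (hB : 0 < coB A B C w) (hC : 0 < coC A B C w) :
    InTri A B C w :=
  ⟨_, _, _, hA, hB, hC, co_sum A B C w, recon' A B C w hD⟩

/-- points of the closed side `BC` have vanishing `A`-coordinate -/
lemma coA_seg (A B C : Pt) (hD : crossp (B - A) (C - A) ≠ 0) {z : Pt}
    (h : z ∈ segment ℝ B C) : coA A B C z = 0 := by
  rw [mem_seg_iff] at h
  obtain ⟨t, _, _, rfl⟩ := h
  rw [coA_affine, coA_B A B C hD, coA_C A B C hD]; ring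

lemma mem_seg_BC {A B C z : Pt} (hD : crossp (B - A) (C - A) ≠ 0)
    (hA : coA A B C z = 0) (hB : 0 ≤ coB A B C z) (hC : 0 ≤ coC A B C z) :
    z ∈ segment ℝ B C := by
  refine ⟨coB A B C z, coC A B C z, hB, hC, by have := co_sum A B C z; linarith, ?_⟩
  have h := recon' A B C z hD
  rw [hA, zero_smul, zero_add] at h
  exact h.symm

lemma mem_seg_AC {A B C z : Pt} (hD : crossp (B - A) (C - A) ≠ 0)
    (hB : coB A B C z = 0) (hA : 0 ≤ coA A B C z) (hC : 0 ≤ coC A B C z) :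
    z ∈ segment ℝ A C := by
  refine ⟨coA A B C z, coC A B C z, hA, hC, by have := co_sum A B C z; linarith, ?_⟩
  have h := recon' A B C z hD
  rw [hB, zero_smul, add_zero] at h
  exact h.symm

lemma mem_seg_AB {A B C z : Pt} (hD : crossp (B - A) (C - A) ≠ 0)
    (hC : coC A B C z = 0) (hA : 0 ≤ coA A B C z) (hB : 0 ≤ coB A B C z) :
    z ∈ segment ℝ A B := by
  refine ⟨coA A B C z, coB A B C z, hA, hB, by have := co_sum A B C z; linarith, ?_⟩
  have h := recon' A B C z hD
  rw [hC, zero_smul, add_zero] at h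
  exact h.symm

lemma zfrac_pos {x0 x1 : ℝ} (h0 : 0 < x0) (h1 : x1 ≤ 0) :
    0 < x0 / (x0 - x1) ∧ x0 / (x0 - x1) ≤ 1 ∧
    (1 - x0 / (x0 - x1)) * x0 + (x0 / (x0 - x1)) * x1 = 0 := by
  have hden : 0 < x0 - x1 := by linarith
  refine ⟨div_pos h0 hden, ?_, ?_⟩
  · rw [div_le_one hden]; linarith
  · field_simp
    ring

lemma interp_nn1 {x0 x1 s : ℝ} (h0 : 0 ≤ x0) (h1 : 0 ≤ x1) (hs0 : 0 ≤ s) (hs1 : s ≤ 1) :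
    0 ≤ (1 - s) * x0 + s * x1 := by
  have e1 := mul_nonneg (by linarith : (0:ℝ) ≤ 1 - s) h0
  have e2 := mul_nonneg hs0 h1
  linarith

lemma interp_nn2 {x0 x1 s : ℝ} (h0 : 0 < x0) (h1 : x1 ≤ 0) (hs0 : 0 ≤ s)
    (hs : s ≤ x0 / (x0 - x1)) : 0 ≤ (1 - s) * x0 + s * x1 := by
  have hden : 0 < x0 - x1 := by linarith
  rw [le_div_iff₀ hden] at hs
  nlinarith

lemma inTri_swap {A B C w : Pt} (h : InTri A B C w) : InTri B A C w := by
  obtain ⟨a, b, c, ha, hb, hc, hs, rfl⟩ := h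
  exact ⟨b, a, c, hb, ha, hc, by linarith, by abel⟩

lemma inTri_ne {A B C w : Pt} (hD : crossp (B - A) (C - A) ≠ 0) (h : InTri A B C w) :
    w ≠ A ∧ w ≠ B ∧ w ≠ C := by
  obtain ⟨hA, hB, hC⟩ := co_of_inTri hD h
  refine ⟨?_, ?_, ?_⟩ <;> rintro rfl
  · rw [coB_A] at hB; exact lt_irrefl 0 hB
  · rw [coC_B] at hC; exact lt_irrefl 0 hC
  · rw [coB_C] at hB; exact lt_irrefl 0 hB

lemma inTri_trans {A B C G' w : Pt} (h1 : InTri A B C G') (h2 : InTri A B G' w) :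
    InTri A B C w := by
  obtain ⟨a', b', c', ha', hb', hc', hs', rfl⟩ := h1
  obtain ⟨a, b, c, ha, hb, hc, hs, rfl⟩ := h2
  refine ⟨a + c * a', b + c * b', c * c', by positivity, by positivity, by positivity,
    by linear_combination hs + c * hs', ?_⟩
  rw [smul_add, smul_add, smul_smul, smul_smul, smul_smul, add_smul, add_smul]
  abel

lemma not_inTri_self {A B w : Pt} (hD : crossp (B - A) (w - A) ≠ 0) :
    ¬ InTri A B w w := fun h => ((inTri_ne hD h).2.2) rfl

/-- interior points seen from vertex `B` along an open segment stay interior -/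
lemma inTri_openB {A B C w : Pt} (hD : crossp (B - A) (C - A) ≠ 0)
    (hw : InTri A B C w) {z : Pt} (hz : z ∈ openSegment ℝ B w) : InTri A B C z := by
  obtain ⟨hA, hB, hC⟩ := co_of_inTri hD hw
  rw [mem_open_iff] at hz
  obtain ⟨t, ht0, ht1, rfl⟩ := hz
  refine inTri_of_co hD ?_ ?_ ?_
  · rw [coA_affine, coA_B A B C hD]; nlinarith
  · rw [coB_affine, coB_B A B C hD]; nlinarith
  · rw [coC_affine, coC_B]; nlinarith

lemma inTri_openA {A B C w : Pt} (hD : crossp (B - A) (C - A) ≠ 0)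
    (hw : InTri A B C w) {z : Pt} (hz : z ∈ openSegment ℝ A w) : InTri A B C z := by
  obtain ⟨hA, hB, hC⟩ := co_of_inTri hD hw
  rw [mem_open_iff] at hz
  obtain ⟨t, ht0, ht1, rfl⟩ := hz
  refine inTri_of_co hD ?_ ?_ ?_
  · rw [coA_affine, coA_A]; nlinarith
  · rw [coB_affine, coB_A]; nlinarith
  · rw [coC_affine, coC_A]; nlinarith

lemma confine {A B C : Pt} (hD : crossp (B - A) (C - A) ≠ 0) {q g : Pt}
    (hqB : 0 < coB A B C q) (hqC : 0 < coC A B C q)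
    (hqA : 0 < coA A B C q ∨ (coA A B C q = 0 ∧ 0 < coA A B C g))
    (hop : ∀ z ∈ openSegment ℝ q g,
        z ∉ segment ℝ B C ∧ z ∉ segment ℝ A C ∧ z ∉ segment ℝ A B)
    (hg : g ∉ segment ℝ B C ∧ g ∉ segment ℝ A C ∧ g ∉ segment ℝ A B) :
    0 < coA A B C g ∧ 0 < coB A B C g ∧ 0 < coC A B C g := by
  by_contra hcon
  push_neg at hcon
  set aq := coA A B C q with haq
  set bq := coB A B C q with hbq
  set cq := coC A B C q with hcq
  set ag := coA A B C g with hag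
  set bg := coB A B C g with hbg
  set cg := coC A B C g with hcg
  have haq0 : 0 ≤ aq := by rcases hqA with h | ⟨h, _⟩ <;> linarith
  -- zero-crossing times
  obtain ⟨sA, hsA⟩ : ∃ t : ℝ, t = if ag ≤ 0 then aq / (aq - ag) else 1 := ⟨_, rfl⟩
  obtain ⟨sB, hsB⟩ : ∃ t : ℝ, t = if bg ≤ 0 then bq / (bq - bg) else 1 := ⟨_, rfl⟩
  obtain ⟨sC, hsC⟩ : ∃ t : ℝ, t = if cg ≤ 0 then cq / (cq - cg) else 1 := ⟨_, rfl⟩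
  have haqpos : ag ≤ 0 → 0 < aq := by
    intro h
    rcases hqA with h' | ⟨h1, h2⟩
    · exact h'
    · linarith
  have hA3 : 0 < sA ∧ sA ≤ 1 ∧ (ag ≤ 0 → (1 - sA) * aq + sA * ag = 0) := by
    rw [hsA]; split_ifs with h
    · obtain ⟨p1, p2, p3⟩ := zfrac_pos (haqpos h) h
      exact ⟨p1, p2, fun _ => p3⟩
    · exact ⟨one_pos, le_refl 1, fun hh => absurd hh h⟩
  have hB3 : 0 < sB ∧ sB ≤ 1 ∧ (bg ≤ 0 → (1 - sB) * bq + sB * bg = 0) := by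
    rw [hsB]; split_ifs with h
    · obtain ⟨p1, p2, p3⟩ := zfrac_pos hqB h
      exact ⟨p1, p2, fun _ => p3⟩
    · exact ⟨one_pos, le_refl 1, fun hh => absurd hh h⟩
  have hC3 : 0 < sC ∧ sC ≤ 1 ∧ (cg ≤ 0 → (1 - sC) * cq + sC * cg = 0) := by
    rw [hsC]; split_ifs with h
    · obtain ⟨p1, p2, p3⟩ := zfrac_pos hqC h
      exact ⟨p1, p2, fun _ => p3⟩
    · exact ⟨one_pos, le_refl 1, fun hh => absurd hh h⟩
  obtain ⟨s, hs⟩ : ∃ t : ℝ, t = min sA (min sB sC) := ⟨_, rfl⟩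
  have hs0 : 0 < s := hs ▸ lt_min hA3.1 (lt_min hB3.1 hC3.1)
  have hsa : s ≤ sA := hs ▸ min_le_left _ _
  have hsb : s ≤ sB := hs ▸ le_trans (min_le_right _ _) (min_le_left _ _)
  have hsc : s ≤ sC := hs ▸ le_trans (min_le_right _ _) (min_le_right _ _)
  have hs1 : s ≤ 1 := le_trans hsa hA3.2.1
  have hmem : s = sA ∨ s = sB ∨ s = sC := by
    rcases min_cases sA (min sB sC) with ⟨he, _⟩ | ⟨he, _⟩
    · left; exact hs.trans he
    · rcases min_cases sB sC with ⟨he2, _⟩ | ⟨he2, _⟩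
      · right; left; exact hs.trans (he.trans he2)
      · right; right; exact hs.trans (he.trans he2)
  -- nonnegativity of all coordinates at time s
  have hAnn : 0 ≤ (1 - s) * aq + s * ag := by
    by_cases h : ag ≤ 0
    · have : sA = aq / (aq - ag) := by rw [hsA, if_pos h]
      exact interp_nn2 (haqpos h) h (le_of_lt hs0) (this ▸ hsa)
    · exact interp_nn1 haq0 (by linarith) (le_of_lt hs0) hs1
  have hBnn : 0 ≤ (1 - s) * bq + s * bg := by
    by_cases h : bg ≤ 0
    · have : sB = bq / (bq - bg) := by rw [hsB, if_pos h]
      exact interp_nn2 hqB h (le_of_lt hs0) (this ▸ hsb)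
    · exact interp_nn1 (le_of_lt hqB) (by linarith) (le_of_lt hs0) hs1
  have hCnn : 0 ≤ (1 - s) * cq + s * cg := by
    by_cases h : cg ≤ 0
    · have : sC = cq / (cq - cg) := by rw [hsC, if_pos h]
      exact interp_nn2 hqC h (le_of_lt hs0) (this ▸ hsc)
    · exact interp_nn1 (le_of_lt hqC) (by linarith) (le_of_lt hs0) hs1
  -- some coordinate vanishes at time s
  have hbadex : ag ≤ 0 ∨ bg ≤ 0 ∨ cg ≤ 0 := by
    by_cases h1 : 0 < ag
    · by_cases h2 : 0 < bg
      · right; right; linarith [hcon h1 h2]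
      · right; left; linarith
    · left; linarith
  have hvan : (1 - s) * aq + s * ag = 0 ∨ (1 - s) * bq + s * bg = 0 ∨
      (1 - s) * cq + s * cg = 0 := by
    -- if s < 1 then s equals one of the fractional (bad) times
    rcases eq_or_lt_of_le hs1 with hseq | hslt
    · -- s = 1 : the bad coordinate has fraction time ≥ s = 1 hence = 1, so value at 1 is 0
      rcases hbadex with h | h | h
      · left
        have h1 : sA = 1 := le_antisymm hA3.2.1 (hseq ▸ hsa)
        have h2 := hA3.2.2 h
        rw [h1] at h2
        rw [hseq]
        linarith
      · right; left
        have h1 : sB = 1 := le_antisymm hB3.2.1 (hseq ▸ hsb)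
        have h2 := hB3.2.2 h
        rw [h1] at h2
        rw [hseq]; linarith
      · right; right
        have h1 : sC = 1 := le_antisymm hC3.2.1 (hseq ▸ hsc)
        have h2 := hC3.2.2 h
        rw [h1] at h2
        rw [hseq]; linarith
    · -- s < 1 : the minimum is attained at a bad coordinate's fraction
      rcases hmem with hseA | hseB | hseC
      · have hA1 : sA < 1 := hseA ▸ hslt
        have hbad : ag ≤ 0 := by
          by_contra hh
          rw [hsA, if_neg hh] at hA1; exact absurd hA1 (lt_irrefl 1)
        left
        rw [hseA]; exact hA3.2.2 hbad
      · have hB1 : sB < 1 := hseB ▸ hslt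
        have hbad : bg ≤ 0 := by
          by_contra hh
          rw [hsB, if_neg hh] at hB1; exact absurd hB1 (lt_irrefl 1)
        right; left
        rw [hseB]; exact hB3.2.2 hbad
      · have hC1 : sC < 1 := hseC ▸ hslt
        have hbad : cg ≤ 0 := by
          by_contra hh
          rw [hsC, if_neg hh] at hC1; exact absurd hC1 (lt_irrefl 1)
        right; right
        rw [hseC]; exact hC3.2.2 hbad
  -- build the boundary point
  set z : Pt := q + s • (g - q) with hz
  have hzA : coA A B C z = (1 - s) * aq + s * ag := coA_affine A B C q g s
  have hzB : coB A B C z = (1 - s) * bq + s * bg := coB_affine A B C q g s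
  have hzC : coC A B C z = (1 - s) * cq + s * cg := coC_affine A B C q g s
  have hzmem : z ∈ segment ℝ B C ∨ z ∈ segment ℝ A C ∨ z ∈ segment ℝ A B := by
    rcases hvan with h | h | h
    · left; exact mem_seg_BC hD (by rw [hzA]; exact h) (by rw [hzB]; exact hBnn)
        (by rw [hzC]; exact hCnn)
    · right; left; exact mem_seg_AC hD (by rw [hzB]; exact h) (by rw [hzA]; exact hAnn)
        (by rw [hzC]; exact hCnn)
    · right; right; exact mem_seg_AB hD (by rw [hzC]; exact h) (by rw [hzA]; exact hAnn)
        (by rw [hzB]; exact hBnn)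
  rcases eq_or_lt_of_le hs1 with hseq | hslt
  · -- z = g
    have hzg : z = g := by rw [hz, hseq, one_smul]; abel
    rw [hzg] at hzmem
    rcases hzmem with h | h | h
    · exact hg.1 h
    · exact hg.2.1 h
    · exact hg.2.2 h
  · have hzo : z ∈ openSegment ℝ q g := (mem_open_iff z q g).2 ⟨s, hs0, hslt, rfl⟩
    obtain ⟨n1, n2, n3⟩ := hop z hzo
    rcases hzmem with h | h | h
    · exact n1 h
    · exact n2 h
    · exact n3 h

/-! #### constraints and visibility -/

lemma pi_swap₁ {a b c d : Pt} (h : ProperInter a b c d) : ProperInter b a c d := by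
  unfold ProperInter at h ⊢
  rwa [openSegment_symm] at h

lemma pi_swap₂ {a b c d : Pt} (h : ProperInter a b c d) : ProperInter a b d c := by
  unfold ProperInter at h ⊢
  rwa [openSegment_symm ℝ c d] at h

lemma pi_comm {a b c d : Pt} (h : ProperInter a b c d) : ProperInter c d a b := by
  unfold ProperInter at h ⊢
  rwa [Set.inter_comm] at h

lemma visible_symm {S : Set (Pt × Pt)} {a b : Pt} (h : Visible S a b) : Visible S b a := by
  rcases h with h | h
  · exact Or.inl (Or.symm h)
  · exact Or.inr fun c hc hpi => h c hc (pi_swap₁ hpi)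

lemma collinear_P {P : Finset Pt} (hgp : GenPos P) {a b c : Pt}
    (ha : a ∈ P) (hb : b ∈ P) (hc : c ∈ P) (h : crossp (b - a) (c - a) = 0) :
    a = b ∨ b = c ∨ a = c := by
  by_contra hcon
  push_neg at hcon
  exact hgp.1 a ha b hb c hc hcon.1 hcon.2.1 hcon.2.2 h

lemma noncol_P {P : Finset Pt} (hgp : GenPos P) {a b c : Pt}
    (ha : a ∈ P) (hb : b ∈ P) (hc : c ∈ P) (h1 : a ≠ b) (h2 : b ≠ c) (h3 : a ≠ c) :
    crossp (b - a) (c - a) ≠ 0 :=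
  hgp.1 a ha b hb c hc h1 h2 h3

/-- no point of `P` lies in the open part of a constraint -/
lemma nopass {P : Finset Pt} {S : Set (Pt × Pt)} (hS : ValidConstraints P S)
    (hgp : GenPos P) {c : Pt × Pt} (hc : c ∈ S) {w : Pt} (hw : w ∈ P) :
    w ∉ openSegment ℝ c.1 c.2 := by
  obtain ⟨h1, h2, h3⟩ := hS.1 c hc
  intro hmem
  have hcol : crossp (c.2 - c.1) (w - c.1) = 0 := open_collinear hmem
  rcases collinear_P hgp h1 h2 hw hcol with h | h | h
  · exact h3 h
  · rw [← h] at hmem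
    exact not_right_mem_open h3 hmem
  · rw [← h] at hmem
    exact not_left_mem_open h3 hmem

/-- a constraint distinct (as a segment) from a visible pair cannot properly cross it -/
lemma prot {P : Finset Pt} {S : Set (Pt × Pt)} (hS : ValidConstraints P S) {a b : Pt}
    (hv : Visible S a b) {c : Pt × Pt} (hc : c ∈ S)
    (h1 : c ≠ (a, b)) (h2 : c ≠ (b, a)) : ¬ ProperInter a b c.1 c.2 := by
  rcases hv with hv | hv
  · rcases hv with hab | hba
    · intro hpi
      exact hS.2 c hc (a, b) hab h1 h2 (pi_comm hpi)
    · intro hpi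
      exact hS.2 c hc (b, a) hba h2 h1 (pi_comm (pi_swap₁ hpi))
  · exact hv c hc

lemma not_visible_elim {S : Set (Pt × Pt)} {a b : Pt} (h : ¬ Visible S a b) :
    ¬ IsConstraintOf S a b ∧ ∃ c ∈ S, ProperInter a b c.1 c.2 := by
  unfold Visible at h
  push_neg at h
  exact ⟨h.1, h.2⟩

/-- side-function value via barycentric coordinates -/
lemma sigma_val (E F G : Pt) (hD : crossp (F - E) (G - E) ≠ 0) (w z : Pt) :
    crossp (w - F) (z - F) =
      (coA E F G w * coC E F G z - coC E F G w * coA E F G z) *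
        crossp (E - F) (G - F) := by
  rw [reconB E F G w hD, reconB E F G z hD, crossp_lin, crossp_lin', crossp_lin']
  simp only [crossp_self, crossp_anticomm (G - F) (E - F)]
  ring

/-! #### the key visibility lemma -/

set_option maxHeartbeats 2000000 in
/-- If `E` sees both `F` and `G`, `F` does not see `G`, and no `E`-incident constraint
crosses a segment from `F` to `G` or to an interior vertex, then some vertex strictly
inside the triangle `EFG` is visible to `F`. -/
lemma genlem {P : Finset Pt} {S : Set (Pt × Pt)} (hS : ValidConstraints P S) (hgp : GenPos P)
    {E F G : Pt} (hE : E ∈ P) (hF : F ∈ P) (hG : G ∈ P)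
    (hEF : E ≠ F) (hEG : E ≠ G) (hFG : F ≠ G)
    (hvEF : Visible S E F) (hvEG : Visible S E G)
    (hnv : ¬ Visible S F G)
    (hgE : ∀ c ∈ S, (c.1 = E ∨ c.2 = E) → ∀ w', (w' = G ∨ (w' ∈ P ∧ InTri E F G w')) →
      ¬ ProperInter F w' c.1 c.2) :
    ∃ w ∈ P, InTri E F G w ∧ Visible S F w := by
  classical
  have hD : crossp (F - E) (G - E) ≠ 0 := noncol_P hgp hE hF hG hEF hFG hEG
  have hY : crossp (E - F) (G - F) ≠ 0 := noncol_P hgp hF hE hG (Ne.symm hEF) hEG hFG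
  obtain ⟨hnc, hex⟩ := not_visible_elim hnv
  -- shared exclusions for a constraint crossing the open segment from F to a target W
  have excl : ∀ c ∈ S, ∀ W, (W = G ∨ (W ∈ P ∧ InTri E F G W)) → ¬ IsConstraintOf S F W →
      ProperInter F W c.1 c.2 →
      (c.1 ≠ E ∧ c.2 ≠ E) ∧ (c.1 ≠ F ∧ c.2 ≠ F) ∧ (c.1 ≠ W ∧ c.2 ≠ W) := by
    intro c hc W hW hncW hpi
    have hWP : W ∈ P := by rcases hW with rfl | ⟨h, _⟩; exacts [hG, h]
    have hWF : W ≠ F := by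
      rcases hW with rfl | ⟨_, h⟩
      · exact Ne.symm hFG
      · exact ((inTri_ne hD h).2.1)
    obtain ⟨hc1P, hc2P, hc12⟩ := hS.1 c hc
    obtain ⟨q, hqFW, hqc⟩ := id hpi
    have hnE : c.1 ≠ E ∧ c.2 ≠ E := by
      constructor
      · intro h; exact hgE c hc (Or.inl h) W hW hpi
      · intro h; exact hgE c hc (Or.inr h) W hW hpi
    have hnF : c.1 ≠ F ∧ c.2 ≠ F := by
      constructor
      · intro h
        have hq1 : q ∈ openSegment ℝ F c.2 := by rw [← h]; exact hqc
        have hcol := share hq1 hqFW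
        rcases collinear_P hgp hF hc2P hWP hcol with h' | h' | h'
        · rw [h] at hc12; exact hc12 h'
        · exact hncW (Or.inl (by rw [← h, ← h']; exact hc))
        · exact hWF h'.symm
      · intro h
        have hq1 : q ∈ openSegment ℝ F c.1 := by
          rw [← h, openSegment_symm]; exact hqc
        have hcol := share hq1 hqFW
        rcases collinear_P hgp hF hc1P hWP hcol with h' | h' | h'
        · rw [h] at hc12; exact hc12 h'.symm
        · refine hncW (Or.inr ?_)
          rw [← h, ← h']
          exact hc
        · exact hWF h'.symm
    have hnW : c.1 ≠ W ∧ c.2 ≠ W := by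
      have hqWF : q ∈ openSegment ℝ W F := by rw [openSegment_symm]; exact hqFW
      constructor
      · intro h
        have hq1 : q ∈ openSegment ℝ W c.2 := by rw [← h]; exact hqc
        have hcol := share hq1 hqWF
        rcases collinear_P hgp hWP hc2P hF hcol with h' | h' | h'
        · rw [h] at hc12; exact hc12 h'
        · exact hncW (Or.inr (by rw [← h, ← h']; exact hc))
        · exact hWF h'
      · intro h
        have hq1 : q ∈ openSegment ℝ W c.1 := by
          rw [← h, openSegment_symm]; exact hqc
        have hcol := share hq1 hqWF
        rcases collinear_P hgp hWP hc1P hF hcol with h' | h' | h'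
        · rw [h] at hc12; exact hc12 h'.symm
        · exact hncW (Or.inl (by rw [← h, ← h']; exact hc))
        · exact hWF h'
    exact ⟨hnE, hnF, hnW⟩
  -- ENTRY: some vertex lies strictly inside the triangle
  have entry : ∃ p ∈ P, InTri E F G p := by
    obtain ⟨c, hc, hpi⟩ := hex
    obtain ⟨⟨hc1E, hc2E⟩, ⟨hc1F, hc2F⟩, ⟨hc1G, hc2G⟩⟩ :=
      excl c hc G (Or.inl rfl) hnc hpi
    obtain ⟨hc1P, hc2P, hc12⟩ := hS.1 c hc
    obtain ⟨q, hqFG, hqc⟩ := hpi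
    -- coA vanishes on line FG and is nonzero on the endpoints of c
    have hlin : ∀ z : Pt, crossp (G - F) (z - F)
        = (0 * coC E F G z - 1 * coA E F G z) * crossp (E - F) (G - F) := by
      intro z
      have h := sigma_val E F G hD G z
      rwa [coA_C E F G hD, coC_C E F G hD] at h
    have hnz : ∀ z ∈ P, z ≠ F → z ≠ G → coA E F G z ≠ 0 := by
      intro z hzP hzF hzG h0
      have h1 : crossp (G - F) (z - F) = 0 := by rw [hlin z, h0]; ring
      rcases collinear_P hgp hF hG hzP h1 with h' | h' | h'
      · exact hFG h'
      · exact hzG h'.symm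
      · exact hzF h'.symm
    -- straddle along c
    obtain ⟨t, ht0, ht1, hqeq⟩ := (mem_open_iff q c.1 c.2).1 hqc
    have hq0 : coA E F G q = 0 :=
      coA_seg E F G hD (openSegment_subset_segment ℝ F G hqFG)
    have hstrad : coA E F G c.1 * coA E F G c.2 < 0 := by
      refine straddle' ?_ ht0 ht1 (hnz c.1 hc1P hc1F hc1G)
      rw [← coA_affine E F G c.1 c.2 t, ← hqeq]
      exact hq0
    -- pick the endpoint on the E side
    obtain ⟨p, hpe, hpP, hpE, hpF, hpG, hpA⟩ :
        ∃ p, (p = c.1 ∨ p = c.2) ∧ p ∈ P ∧ p ≠ E ∧ p ≠ F ∧ p ≠ G ∧ 0 < coA E F G p := by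
      rcases lt_or_ge 0 (coA E F G c.1) with h | h
      · exact ⟨c.1, Or.inl rfl, hc1P, hc1E, hc1F, hc1G, h⟩
      · refine ⟨c.2, Or.inr rfl, hc2P, hc2E, hc2F, hc2G, ?_⟩
        nlinarith
    -- confine p into the triangle
    obtain ⟨s, hs0, hs1, hqs⟩ := (mem_open_iff q F G).1 hqFG
    have hqB : 0 < coB E F G q := by
      rw [hqs, coB_affine, coB_B E F G hD, coB_C]; nlinarith
    have hqC : 0 < coC E F G q := by
      rw [hqs, coC_affine, coC_B, coC_C E F G hD]; nlinarith
    have hsub : openSegment ℝ q p ⊆ openSegment ℝ c.1 c.2 := open_sub_endpoint hqc hpe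
    have hcEF : c ≠ (E, F) := fun h => hc1E (by rw [h])
    have hcFE : c ≠ (F, E) := fun h => hc1F (by rw [h])
    have hcEG : c ≠ (E, G) := fun h => hc1E (by rw [h])
    have hcGE : c ≠ (G, E) := fun h => hc1G (by rw [h])
    have hop : ∀ z ∈ openSegment ℝ q p,
        z ∉ segment ℝ F G ∧ z ∉ segment ℝ E G ∧ z ∉ segment ℝ E F := by
      intro z hz
      have hzc : z ∈ openSegment ℝ c.1 c.2 := hsub hz
      obtain ⟨r, hr0, hr1, hzeq⟩ := (mem_open_iff z q p).1 hz
      have hzA : 0 < coA E F G z := by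
        rw [hzeq, coA_affine, hq0]; nlinarith
      refine ⟨?_, ?_, ?_⟩
      · intro hmem
        rw [coA_seg E F G hD hmem] at hzA
        exact lt_irrefl 0 hzA
      · intro hmem
        rcases seg_cases hmem with rfl | rfl | hzo
        · exact nopass hS hgp hc hE hzc
        · exact nopass hS hgp hc hG hzc
        · exact prot hS hvEG hc hcEG hcGE ⟨z, hzo, hzc⟩
      · intro hmem
        rcases seg_cases hmem with rfl | rfl | hzo
        · exact nopass hS hgp hc hE hzc
        · exact nopass hS hgp hc hF hzc
        · exact prot hS hvEF hc hcEF hcFE ⟨z, hzo, hzc⟩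
    have hgtrio : p ∉ segment ℝ F G ∧ p ∉ segment ℝ E G ∧ p ∉ segment ℝ E F := by
      refine ⟨?_, ?_, ?_⟩
      · intro hmem
        rw [coA_seg E F G hD hmem] at hpA
        exact lt_irrefl 0 hpA
      · intro hmem
        rcases seg_cases hmem with h | h | hzo
        · exact hpE h
        · exact hpG h
        · rcases collinear_P hgp hE hG hpP (open_collinear hzo) with h' | h' | h'
          · exact hEG h'
          · exact hpG h'.symm
          · exact hpE h'.symm
      · intro hmem
        rcases seg_cases hmem with h | h | hzo
        · exact hpE h
        · exact hpF h
        · rcases collinear_P hgp hE hF hpP (open_collinear hzo) with h' | h' | h'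
          · exact hEF h'
          · exact hpF h'.symm
          · exact hpE h'.symm
    obtain ⟨hA', hB', hC'⟩ :=
      confine hD hqB hqC (Or.inr ⟨hq0, hpA⟩) hop hgtrio
    exact ⟨p, hpP, inTri_of_co hD hA' hB' hC'⟩
  -- DESCENT: the interior vertex angularly closest to the `E`-side is visible to `F`
  obtain ⟨p0, hp0P, hp0T⟩ := entry
  set Dfin := P.filter (fun w => InTri E F G w) with hDfin
  have hne : Dfin.Nonempty := ⟨p0, Finset.mem_filter.2 ⟨hp0P, hp0T⟩⟩
  obtain ⟨W, hWD, hWmin⟩ :=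
    Dfin.exists_min_image (fun w => coC E F G w / coA E F G w) hne
  have hWP : W ∈ P := (Finset.mem_filter.1 hWD).1
  have hWT : InTri E F G W := (Finset.mem_filter.1 hWD).2
  obtain ⟨hWa, hWb, hWc⟩ := co_of_inTri hD hWT
  obtain ⟨hWE, hWF, hWG⟩ := inTri_ne hD hWT
  refine ⟨W, hWP, hWT, ?_⟩
  by_contra hvFW
  obtain ⟨hncW, c₃, hc₃, hpi₃⟩ := not_visible_elim hvFW
  obtain ⟨⟨h31E, h32E⟩, ⟨h31F, h32F⟩, ⟨h31W, h32W⟩⟩ :=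
    excl c₃ hc₃ W (Or.inr ⟨hWP, hWT⟩) hncW hpi₃
  obtain ⟨h31P, h32P, h312⟩ := hS.1 c₃ hc₃
  obtain ⟨q₃, hqFW, hqc₃⟩ := hpi₃
  -- the side function of the line F-W
  have hsigE : crossp (W - F) (E - F)
      = (coA E F G W * 0 - coC E F G W * 1) * crossp (E - F) (G - F) := by
    have h := sigma_val E F G hD W E
    rwa [coA_A, coC_A] at h
  have hsigG : crossp (W - F) (G - F)
      = (coA E F G W * 1 - coC E F G W * 0) * crossp (E - F) (G - F) := by
    have h := sigma_val E F G hD W G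
    rwa [coA_C E F G hD, coC_C E F G hD] at h
  have hsigEne : crossp (W - F) (E - F) ≠ 0 := by
    rw [hsigE]
    intro h
    rcases mul_eq_zero.1 h with h' | h'
    · nlinarith
    · exact hY h'
  have hnz₃ : ∀ z ∈ P, z ≠ F → z ≠ W → crossp (W - F) (z - F) ≠ 0 := by
    intro z hzP hzF hzW h0
    have h1 : crossp (z - F) (W - F) = 0 := by
      rw [crossp_anticomm, h0]; ring
    rcases collinear_P hgp hF hzP hWP h1 with h' | h' | h'
    · exact hzF h'.symm
    · exact hzW h'
    · exact hWF h'.symm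
  -- straddle of c₃ across the line F-W
  obtain ⟨t₃, ht₃0, ht₃1, hq₃eq⟩ := (mem_open_iff q₃ c₃.1 c₃.2).1 hqc₃
  have hq₃0 : crossp (W - F) (q₃ - F) = 0 := open_collinear hqFW
  have hstrad₃ : crossp (W - F) (c₃.1 - F) * crossp (W - F) (c₃.2 - F) < 0 := by
    refine straddle' ?_ ht₃0 ht₃1 (hnz₃ c₃.1 h31P h31F h31W)
    rw [← cr_affine (W - F) F c₃.1 c₃.2 t₃, ← hq₃eq]
    exact hq₃0
  -- pick the endpoint on the E side of the line F-W
  obtain ⟨e, hee, heP, heE, heF, heW, heside⟩ :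
      ∃ e, (e = c₃.1 ∨ e = c₃.2) ∧ e ∈ P ∧ e ≠ E ∧ e ≠ F ∧ e ≠ W ∧
        0 < crossp (W - F) (e - F) * crossp (W - F) (E - F) := by
    rcases lt_or_ge 0 (crossp (W - F) (c₃.1 - F) * crossp (W - F) (E - F)) with h | h
    · exact ⟨c₃.1, Or.inl rfl, h31P, h31E, h31F, h31W, h⟩
    · refine ⟨c₃.2, Or.inr rfl, h32P, h32E, h32F, h32W, ?_⟩
      have h1 := hnz₃ c₃.1 h31P h31F h31W
      have h3 := hsigEne
      have hX : crossp (W - F) (c₃.1 - F) * crossp (W - F) (E - F) < 0 :=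
        lt_of_le_of_ne h (mul_ne_zero h1 h3)
      have hsq : 0 < crossp (W - F) (c₃.1 - F) * crossp (W - F) (c₃.1 - F) := by
        rcases h1.lt_or_gt with hh | hh <;> nlinarith
      nlinarith [mul_pos_of_neg_of_neg hstrad₃ hX]
  -- G is on the other side
  have hsideG : crossp (W - F) (G - F) * crossp (W - F) (E - F) < 0 := by
    rw [hsigE, hsigG]
    have h5 : 0 < crossp (E - F) (G - F) * crossp (E - F) (G - F) := by
      rcases hY.lt_or_gt with h | h
      · nlinarith
      · nlinarith
    nlinarith [mul_pos (mul_pos hWa hWc) h5]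
  -- confine e into the triangle
  have hsub₃ : openSegment ℝ q₃ e ⊆ openSegment ℝ c₃.1 c₃.2 := open_sub_endpoint hqc₃ hee
  have hcEF₃ : c₃ ≠ (E, F) := fun h => h31E (by rw [h])
  have hcFE₃ : c₃ ≠ (F, E) := fun h => h31F (by rw [h])
  have hcEG₃ : c₃ ≠ (E, G) := fun h => h31E (by rw [h])
  have hcGE₃ : c₃ ≠ (G, E) := fun h => h32E (by rw [h])
  have hsegFG : ∀ z : Pt, z ∈ segment ℝ F G → 0 < crossp (W - F) (z - F) *
      crossp (W - F) (E - F) → False := by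
    intro z hmem hpos
    obtain ⟨m, hm0, hm1, hzeq⟩ := (mem_seg_iff z F G).1 hmem
    have hval : crossp (W - F) (z - F)
        = (1 - m) * crossp (W - F) (F - F) + m * crossp (W - F) (G - F) := by
      rw [hzeq]; exact cr_affine (W - F) F F G m
    rw [sub_self, crossp_zero_right, mul_zero, zero_add] at hval
    rw [hval] at hpos
    nlinarith
  have hop₃ : ∀ z ∈ openSegment ℝ q₃ e,
      z ∉ segment ℝ F G ∧ z ∉ segment ℝ E G ∧ z ∉ segment ℝ E F := by
    intro z hz
    have hzc : z ∈ openSegment ℝ c₃.1 c₃.2 := hsub₃ hz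
    obtain ⟨r, hr0, hr1, hzeq⟩ := (mem_open_iff z q₃ e).1 hz
    have hzside : 0 < crossp (W - F) (z - F) * crossp (W - F) (E - F) := by
      have hval : crossp (W - F) (z - F)
          = (1 - r) * crossp (W - F) (q₃ - F) + r * crossp (W - F) (e - F) := by
        rw [hzeq]; exact cr_affine (W - F) F q₃ e r
      rw [hq₃0, mul_zero, zero_add] at hval
      rw [hval, mul_assoc]
      exact mul_pos hr0 heside
    refine ⟨fun hmem => hsegFG z hmem hzside, ?_, ?_⟩
    · intro hmem
      rcases seg_cases hmem with rfl | rfl | hzo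
      · exact nopass hS hgp hc₃ hE hzc
      · exact nopass hS hgp hc₃ hG hzc
      · exact prot hS hvEG hc₃ hcEG₃ hcGE₃ ⟨z, hzo, hzc⟩
    · intro hmem
      rcases seg_cases hmem with rfl | rfl | hzo
      · exact nopass hS hgp hc₃ hE hzc
      · exact nopass hS hgp hc₃ hF hzc
      · exact prot hS hvEF hc₃ hcEF₃ hcFE₃ ⟨z, hzo, hzc⟩
  have hgtrio₃ : e ∉ segment ℝ F G ∧ e ∉ segment ℝ E G ∧ e ∉ segment ℝ E F := by
    refine ⟨fun hmem => hsegFG e hmem heside, ?_, ?_⟩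
    · intro hmem
      rcases seg_cases hmem with h | h | hzo
      · exact heE h
      · exact hsegFG e (by rw [h]; exact right_mem_segment ℝ F G) heside
      · rcases collinear_P hgp hE hG heP (open_collinear hzo) with h' | h' | h'
        · exact hEG h'
        · exact hsegFG e (by rw [← h']; exact right_mem_segment ℝ F G) heside
        · exact heE h'.symm
    · intro hmem
      rcases seg_cases hmem with h | h | hzo
      · exact heE h
      · exact heF h
      · rcases collinear_P hgp hE hF heP (open_collinear hzo) with h' | h' | h'
        · exact hEF h'
        · exact heF h'.symm
        · exact heE h'.symm
  -- q₃ is interior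
  have hq₃T : InTri E F G q₃ := inTri_openB hD hWT hqFW
  obtain ⟨hq₃A, hq₃B, hq₃C⟩ := co_of_inTri hD hq₃T
  obtain ⟨heA, heB, heC⟩ := confine hD hq₃B hq₃C (Or.inl hq₃A) hop₃ hgtrio₃
  have heT : InTri E F G e := inTri_of_co hD heA heB heC
  -- contradiction with minimality
  have heD : e ∈ Dfin := Finset.mem_filter.2 ⟨heP, heT⟩
  have hmin := hWmin e heD
  have hsig_e : crossp (W - F) (e - F)
      = (coA E F G W * coC E F G e - coC E F G W * coA E F G e) *
        crossp (E - F) (G - F) := sigma_val E F G hD W e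
  have hsigE' : crossp (W - F) (E - F) = - coC E F G W * crossp (E - F) (G - F) := by
    rw [hsigE]; ring
  have hY2 : 0 < crossp (E - F) (G - F) * crossp (E - F) (G - F) := by
    rcases hY.lt_or_gt with h | h
    · nlinarith
    · nlinarith
  have hkey : coA E F G W * coC E F G e < coC E F G W * coA E F G e := by
    rw [hsig_e, hsigE'] at heside
    nlinarith [mul_pos hWc hY2, heside]
  have hfrac : coC E F G e / coA E F G e < coC E F G W / coA E F G W := by
    rw [div_lt_div_iff₀ heA hWa]
    nlinarith [hkey]
  exact absurd hmin (by push_neg; exact hfrac)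

/-! #### side functions at the apex `A`, projections, cones -/

lemma crossp_smul_right (t : ℝ) (x y : Pt) : crossp x (t • y) = t * crossp x y := by
  simp only [crossp, pt_apply_smul]; ring

lemma sigma_valA (A B C : Pt) (hD : crossp (B - A) (C - A) ≠ 0) (w z : Pt) :
    crossp (w - A) (z - A)
      = (coB A B C w * coC A B C z - coC A B C w * coB A B C z) *
        crossp (B - A) (C - A) := by
  rw [recon A B C w hD, recon A B C z hD, crossp_lin, crossp_lin', crossp_lin']
  simp only [crossp_self, crossp_anticomm (C - A) (B - A)]
  ring

lemma sigma_valA_B (A B C : Pt) (hD : crossp (B - A) (C - A) ≠ 0) (w : Pt) :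
    crossp (w - A) (B - A) = - coC A B C w * crossp (B - A) (C - A) := by
  have h := sigma_valA A B C hD w B
  rw [coB_B A B C hD, coC_B] at h
  rw [h]; ring

lemma theta_lt {A B C : Pt} (hD : crossp (B - A) (C - A) ≠ 0) {w' ω : Pt}
    (hw' : InTri A B C w') (hω : InTri A B C ω)
    (hsign : crossp (w' - A) (B - A) * crossp (w' - A) (ω - A) < 0) :
    coC A B C w' / coB A B C w' < coC A B C ω / coB A B C ω := by
  obtain ⟨_, hb', hc'⟩ := co_of_inTri hD hw'
  obtain ⟨_, hbω, hcω⟩ := co_of_inTri hD hω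
  rw [sigma_valA_B A B C hD w', sigma_valA A B C hD w' ω] at hsign
  have hD2 : 0 < crossp (B - A) (C - A) * crossp (B - A) (C - A) := by
    rcases hD.lt_or_gt with h | h
    · nlinarith
    · nlinarith
  rw [div_lt_div_iff₀ hb' hbω]
  nlinarith [mul_pos hc' hD2]

lemma projB_self (i : Fin 3) (u : Pt) : projB i u u = 0 := by
  unfold projB dotp
  rw [sub_self]
  have h0 : (0 : Pt) 0 = 0 := rfl
  have h1 : (0 : Pt) 1 = 0 := rfl
  rw [h0, h1]; ring

lemma projB_decomp (i : Fin 3) (u v x w : Pt) (b c : ℝ)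
    (h : w - u = b • (v - u) + c • (x - u)) :
    projB i u w = b * projB i u v + c * projB i u x := by
  unfold projB dotp
  rw [h, pt_apply_add, pt_apply_add, pt_apply_smul, pt_apply_smul, pt_apply_smul,
    pt_apply_smul]
  ring

lemma sqrt3half_pos : (0 : ℝ) < Real.sqrt 3 / 2 :=
  div_pos (Real.sqrt_pos.2 (by norm_num)) two_pos

lemma projB_pos {i : Fin 3} {u v : Pt} (h : inPosCone i u v) : 0 < projB i u v :=
  lt_of_lt_of_le (mul_pos sqrt3half_pos (dist_pos.2 (fun he => h.1 he.symm))) h.2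

lemma inPosCone_combo {i : Fin 3} {u v x w : Pt}
    (hv : inPosCone i u v) (hx : inPosCone i u x)
    {b c : ℝ} (hb : 0 < b) (hc : 0 < c) (h : w - u = b • (v - u) + c • (x - u)) :
    inPosCone i u w := by
  have hpv := projB_pos hv
  have hpx := projB_pos hx
  have hproj : projB i u w = b * projB i u v + c * projB i u x :=
    projB_decomp i u v x w b c h
  have hwu : w ≠ u := by
    intro he
    rw [he, projB_self] at hproj
    nlinarith
  refine ⟨hwu, ?_⟩
  have hnorm : ‖w - u‖ ≤ b * ‖v - u‖ + c * ‖x - u‖ := by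
    rw [h]
    refine le_trans (norm_add_le _ _) ?_
    rw [norm_smul, norm_smul, Real.norm_eq_abs, Real.norm_eq_abs,
      abs_of_pos hb, abs_of_pos hc]
  have hd : dist u w = ‖w - u‖ := by rw [dist_eq_norm, norm_sub_rev]
  have hdv : dist u v = ‖v - u‖ := by rw [dist_eq_norm, norm_sub_rev]
  have hdx : dist u x = ‖x - u‖ := by rw [dist_eq_norm, norm_sub_rev]
  have h1 : Real.sqrt 3 / 2 * dist u w ≤
      b * (Real.sqrt 3 / 2 * dist u v) + c * (Real.sqrt 3 / 2 * dist u x) := by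
    rw [hd, hdv, hdx]
    nlinarith [sqrt3half_pos, hnorm]
  refine le_trans h1 ?_
  rw [hproj]
  have h2 := mul_le_mul_of_nonneg_left hv.2 hb.le
  have h3 := mul_le_mul_of_nonneg_left hx.2 hc.le
  linarith

/-- all properties of interior points of the ambient triangle -/
lemma tri_props {i : Fin 3} {u v x w : Pt} (hD : crossp (v - u) (x - u) ≠ 0)
    (hcv : inPosCone i u v) (hcx : inPosCone i u x) (hpx : projB i u x < projB i u v)
    (hw : InTri u v x w) :
    w ≠ u ∧ w ≠ v ∧ inPosCone i u w ∧ projB i u w < projB i u v ∧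
      (0 < coB u v x w ∧ 0 < coC u v x w ∧
        w - u = coB u v x w • (v - u) + coC u v x w • (x - u)) := by
  obtain ⟨ha, hb, hc⟩ := co_of_inTri hD hw
  obtain ⟨hne1, hne2, _⟩ := inTri_ne hD hw
  have hdec := recon u v x w hD
  have hproj : projB i u w = coB u v x w * projB i u v + coC u v x w * projB i u x :=
    projB_decomp i u v x w _ _ hdec
  have hpv := projB_pos hcv
  have hsum := co_sum u v x w
  have hlt : projB i u w < projB i u v := by
    rw [hproj]; nlinarith
  exact ⟨hne1, hne2, inPosCone_combo hcv hcx hb hc hdec, hlt, hb, hc, hdec⟩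

lemma between_transfer {u v x w s : Pt} {b c : ℝ} (hb : 0 < b) (hc : 0 < c)
    (hs : s - u = b • (v - u) + c • (x - u)) (h : StrictlyBetween u v w s) :
    StrictlyBetween u v w x := by
  have e1 : crossp (w - u) (s - u)
      = b * crossp (w - u) (v - u) + c * crossp (w - u) (x - u) := by
    rw [hs, crossp_lin']
  have ha : crossp (w - u) (v - u) = - crossp (v - u) (w - u) := crossp_anticomm _ _
  rcases h with ⟨h1, h2⟩ | ⟨h1, h2⟩
  · left
    refine ⟨h1, ?_⟩
    nlinarith
  · right
    refine ⟨h1, ?_⟩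
    nlinarith

lemma subcone_transfer {S : Set (Pt × Pt)} {u : Pt} {i : Fin 3} {v x s : Pt}
    (hsub : SameSubcone S u i v x) (hcs : inPosCone i u s)
    {b c : ℝ} (hb : 0 < b) (hc : 0 < c)
    (hs : s - u = b • (v - u) + c • (x - u)) : SameSubcone S u i v s :=
  ⟨hsub.1, hcs, fun w hw hbet => hsub.2.2 w hw (between_transfer hb hc hs hbet)⟩

lemma crossp_sub_left (x y z : Pt) : crossp (x - y) z = crossp x z - crossp y z := by
  simp only [crossp, pt_apply_sub]; ring
lemma crossp_sub_right (x y z : Pt) : crossp x (y - z) = crossp x y - crossp x z := by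
  simp only [crossp, pt_apply_sub]; ring
lemma crossp_smul_left (t : ℝ) (x y : Pt) : crossp (t • x) y = t * crossp x y := by
  simp only [crossp, pt_apply_smul]; ring

/-! #### no `u`-incident constraint crosses segments from `v` into the triangle -/

set_option maxHeartbeats 2000000 in
lemma no_u_inc {P : Finset Pt} {S : Set (Pt × Pt)} (hS : ValidConstraints P S)
    (hgp : GenPos P) {i : Fin 3} {u v x : Pt} (hu : u ∈ P) (hv : v ∈ P) (hx : x ∈ P)
    (huv : u ≠ v) (hux : u ≠ x) (hvx : v ≠ x)
    (hsub : SameSubcone S u i v x) :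
    ∀ c ∈ S, (c.1 = u ∨ c.2 = u) → ∀ w', (w' = x ∨ (w' ∈ P ∧ InTri u v x w')) →
      ¬ ProperInter v w' c.1 c.2 := by
  intro c hc hinc w' hw' hpi
  have hX : crossp (v - u) (x - u) ≠ 0 := noncol_P hgp hu hv hx huv hvx hux
  -- normalize the constraint to the form (u, ω)
  obtain ⟨ω, hωcon, hqset⟩ : ∃ ω, IsConstraintOf S u ω ∧
      openSegment ℝ c.1 c.2 = openSegment ℝ u ω := by
    have h0 : (c.1, c.2) ∈ S := by rwa [Prod.mk.eta]
    rcases hinc with h | h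
    · rw [h] at h0
      exact ⟨c.2, Or.inl h0, by rw [h]⟩
    · rw [h] at h0
      exact ⟨c.1, Or.inr h0, by rw [h]; exact openSegment_symm ℝ _ _⟩
  obtain ⟨q, hq1, hq2⟩ := hpi
  rw [hqset] at hq2
  -- decompose w'
  obtain ⟨b', c', hb'0, hc'0, hdec⟩ : ∃ b' c' : ℝ, 0 ≤ b' ∧ 0 < c' ∧
      w' - u = b' • (v - u) + c' • (x - u) := by
    rcases hw' with rfl | ⟨_, hT⟩
    · refine ⟨0, 1, le_refl 0, one_pos, ?_⟩
      rw [zero_smul, one_smul, zero_add]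
    · obtain ⟨_, hb, hc⟩ := co_of_inTri hX hT
      exact ⟨_, _, hb.le, hc, recon u v x w' hX⟩
  obtain ⟨t, ht0, ht1, hqeq⟩ := (mem_open_iff q u ω).1 hq2
  obtain ⟨s, hs0, hs1, hqs⟩ := (mem_open_iff q v w').1 hq1
  have hqu : q - u = (1:ℝ) • (v - u) + s • (w' - v) := by rw [hqs, one_smul]; abel
  have hqu' : q - u = t • (ω - u) := by rw [hqeq]; abel
  have hwv : w' - v = (w' - u) - (v - u) := by abel
  have e2 : crossp (v - u) (w' - v) = c' * crossp (v - u) (x - u) := by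
    rw [hwv, crossp_sub_right, hdec, crossp_lin', crossp_self]
    ring
  have e4 : crossp (w' - v) (x - u) = (b' - 1) * crossp (v - u) (x - u) := by
    rw [hwv, crossp_sub_left, hdec, crossp_lin, crossp_self]
    ring
  have e1 : crossp (v - u) (q - u) = s * (c' * crossp (v - u) (x - u)) := by
    rw [hqu, crossp_lin', crossp_self, e2]
    ring
  have e3 : crossp (q - u) (x - u) = (1 - s + s * b') * crossp (v - u) (x - u) := by
    rw [hqu, crossp_lin, e4]
    ring
  have e5 : crossp (v - u) (q - u) = t * crossp (v - u) (ω - u) := by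
    rw [hqu', crossp_smul_right]
  have e6 : crossp (q - u) (x - u) = t * crossp (ω - u) (x - u) := by
    rw [hqu', crossp_smul_left]
  have key1 : t * crossp (v - u) (ω - u) = s * c' * crossp (v - u) (x - u) := by
    rw [← e5, e1]; ring
  have key2 : t * crossp (ω - u) (x - u)
      = (1 - s + s * b') * crossp (v - u) (x - u) := by
    rw [← e6, e3]
  have hK1 : 0 < s * c' := mul_pos hs0 hc'0
  have hK2 : 0 < 1 - s + s * b' := by nlinarith
  have hbet : StrictlyBetween u v ω x := by
    rcases hX.lt_or_gt with hXn | hXp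
    · right
      constructor
      · nlinarith [key1, mul_pos hK1 (neg_pos.2 hXn), mul_pos ht0 ht0]
      · nlinarith [key2, mul_pos hK2 (neg_pos.2 hXn), mul_pos ht0 ht0]
    · left
      constructor
      · nlinarith [key1, mul_pos hK1 hXp, mul_pos ht0 ht0]
      · nlinarith [key2, mul_pos hK2 hXp, mul_pos ht0 ht0]
  exact hsub.2.2 ω hωcon hbet

/-! #### the landing lemma for `v`-incident constraints -/

set_option maxHeartbeats 2000000 in
/-- If a `v`-incident constraint crosses the open segment from `u` to an interior
vertex `w'` of the triangle `u v T` whose sides `uv` (visible) and `uT`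
(not crossed by `v`-incident constraints) are protected, then its other endpoint `ω`
lands strictly inside the triangle, on the far side of the line `u w'` from `v`. -/
lemma vinc_gen {P : Finset Pt} {S : Set (Pt × Pt)} (hS : ValidConstraints P S)
    (hgp : GenPos P) {u v T : Pt} (hu : u ∈ P) (hv : v ∈ P) (hT : T ∈ P)
    (huv : u ≠ v) (huT : u ≠ T) (hvT : v ≠ T)
    (hvisuv : Visible S u v)
    (hside : ∀ c ∈ S, (c.1 = v ∨ c.2 = v) → ¬ ProperInter u T c.1 c.2)
    {c : Pt × Pt} (hc : c ∈ S) (hinc : c.1 = v ∨ c.2 = v)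
    {w' : Pt} (hw'P : w' ∈ P) (hw'T : InTri u v T w')
    (hpi : ProperInter u w' c.1 c.2) :
    ∃ ω, ω ∈ P ∧ InTri u v T ω ∧ IsConstraintOf S v ω ∧
      crossp (w' - u) (v - u) * crossp (w' - u) (ω - u) < 0 := by
  have hX : crossp (v - u) (T - u) ≠ 0 := noncol_P hgp hu hv hT huv hvT huT
  obtain ⟨h1P, h2P, h12⟩ := hS.1 c hc
  obtain ⟨hw'u, hw'v, hw'T'⟩ := inTri_ne hX hw'T
  obtain ⟨hw'a, hw'b, hw'c⟩ := co_of_inTri hX hw'T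
  -- normalize the constraint to the form (v, ω)
  obtain ⟨ω, hωP, hωv, hωcon, hqset⟩ : ∃ ω, ω ∈ P ∧ ω ≠ v ∧ IsConstraintOf S v ω ∧
      openSegment ℝ c.1 c.2 = openSegment ℝ v ω := by
    have h0 : (c.1, c.2) ∈ S := by rwa [Prod.mk.eta]
    rcases hinc with h | h
    · rw [h] at h0
      exact ⟨c.2, h2P, fun he => h12 (h.trans he.symm), Or.inl h0, by rw [h]⟩
    · rw [h] at h0
      exact ⟨c.1, h1P, fun he => h12 (he.trans h.symm), Or.inr h0,
        by rw [h]; exact openSegment_symm ℝ _ _⟩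
  obtain ⟨q, hq, hqc0⟩ := hpi
  rw [hqset] at hqc0
  have hqT : InTri u v T q := inTri_openA hX hw'T hq
  obtain ⟨hqa, hqb, hqc⟩ := co_of_inTri hX hqT
  -- ω is not T
  have hωT : ω ≠ T := by
    intro h
    have h1 : coA u v T q = 0 := by
      refine coA_seg u v T hX (openSegment_subset_segment ℝ v T ?_)
      rw [← h]; exact hqc0
    rw [h1] at hqa
    exact lt_irrefl 0 hqa
  -- ω is not u
  have hvw'X : crossp (v - u) (w' - u) ≠ 0 := by
    have h := sigma_valA u v T hX w' v
    rw [coB_B u v T hX, coC_B] at h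
    have h2 : crossp (w' - u) (v - u) = - coC u v T w' * crossp (v - u) (T - u) := by
      rw [h]; ring
    intro h0
    rw [crossp_anticomm] at h0
    rw [h2] at h0
    rcases mul_eq_zero.1 (neg_eq_zero.1 h0) with h' | h'
    · exact (ne_of_gt hw'c) (neg_eq_zero.1 h')
    · exact hX h'
  have hωu : ω ≠ u := by
    intro h
    have hq1 : q ∈ openSegment ℝ u v := by
      rw [openSegment_symm, ← h]; exact hqc0
    exact hvw'X (share hq1 hq)
  -- side function straddle
  have hσq : crossp (w' - u) (q - u) = 0 := open_collinear hq
  have hσv : crossp (w' - u) (v - u) ≠ 0 := by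
    intro h0
    rw [crossp_anticomm] at hvw'X
    exact hvw'X (by rw [h0]; ring)
  have hσω : crossp (w' - u) (ω - u) ≠ 0 := by
    intro h0
    have h1 : crossp (w' - u) (ω - u) = 0 := h0
    rcases collinear_P hgp hu hw'P hωP h1 with h' | h' | h'
    · exact hw'u h'.symm
    · -- w' = ω : the constraint would share the endpoint w'
      have hq2 : q ∈ openSegment ℝ w' v := by
        rw [openSegment_symm]; rw [← h'] at hqc0; exact hqc0
      have hq3 : q ∈ openSegment ℝ w' u := by
        rw [openSegment_symm]; exact hq
      have := share hq2 hq3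
      rcases collinear_P hgp hw'P hv hu this with h'' | h'' | h''
      · exact hw'v h''
      · exact huv h''.symm
      · exact hw'u h''
    · exact hωu h'.symm
  obtain ⟨s, hs0, hs1, hqeq⟩ := (mem_open_iff q v ω).1 hqc0
  have hstrad : crossp (w' - u) (v - u) * crossp (w' - u) (ω - u) < 0 := by
    refine straddle' ?_ hs0 hs1 hσv
    rw [← cr_affine (w' - u) u v ω s, ← hqeq]
    exact hσq
  -- confinement of ω
  have hsub : openSegment ℝ q ω ⊆ openSegment ℝ v ω := open_sub hqc0
  have hop : ∀ z ∈ openSegment ℝ q ω,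
      z ∉ segment ℝ v T ∧ z ∉ segment ℝ u T ∧ z ∉ segment ℝ u v := by
    intro z hz
    have hzvω : z ∈ openSegment ℝ v ω := hsub hz
    have hzc : z ∈ openSegment ℝ c.1 c.2 := by rw [hqset]; exact hzvω
    refine ⟨?_, ?_, ?_⟩
    · intro hmem
      rcases seg_cases hmem with rfl | rfl | hzo
      · exact not_left_mem_open hωv.symm hzvω
      · exact nopass hS hgp hc hT hzc
      · have := share hzo hzvω
        rcases collinear_P hgp hv hT hωP this with h' | h' | h'
        · exact hvT h'
        · exact hωT h'.symm
        · exact hωv h'.symm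
    · intro hmem
      rcases seg_cases hmem with rfl | rfl | hzo
      · exact nopass hS hgp hc hu hzc
      · exact nopass hS hgp hc hT hzc
      · exact hside c hc hinc ⟨z, hzo, hzc⟩
    · intro hmem
      rcases seg_cases hmem with rfl | rfl | hzo
      · exact nopass hS hgp hc hu hzc
      · exact not_left_mem_open hωv.symm hzvω
      · have hz1 : z ∈ openSegment ℝ v u := by
          rw [openSegment_symm]; exact hzo
        have := share hz1 hzvω
        rcases collinear_P hgp hv hu hωP this with h' | h' | h'
        · exact huv h'.symm
        · exact hωu h'.symm
        · exact hωv h'.symm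
  have hgtrio : ω ∉ segment ℝ v T ∧ ω ∉ segment ℝ u T ∧ ω ∉ segment ℝ u v := by
    refine ⟨?_, ?_, ?_⟩
    · intro hmem
      rcases seg_cases hmem with h | h | hzo
      · exact hωv h
      · exact hωT h
      · rcases collinear_P hgp hv hT hωP (open_collinear hzo) with h' | h' | h'
        · exact hvT h'
        · exact hωT h'.symm
        · exact hωv h'.symm
    · intro hmem
      rcases seg_cases hmem with h | h | hzo
      · exact hωu h
      · exact hωT h
      · rcases collinear_P hgp hu hT hωP (open_collinear hzo) with h' | h' | h'
        · exact huT h'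
        · exact hωT h'.symm
        · exact hωu h'.symm
    · intro hmem
      rcases seg_cases hmem with h | h | hzo
      · exact hωu h
      · exact hωv h
      · rcases collinear_P hgp hu hv hωP (open_collinear hzo) with h' | h' | h'
        · exact huv h'
        · exact hωv h'.symm
        · exact hωu h'.symm
  obtain ⟨hA', hB', hC'⟩ := confine hX hqb hqc (Or.inl hqa) hop hgtrio
  exact ⟨ω, hωP, inTri_of_co hX hA' hB' hC', hωcon, hstrad⟩

open scoped Classical in
lemma card_lt {P : Finset Pt} {u v t s : Pt}
    (hX : crossp (v - u) (s - u) ≠ 0)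
    (hsT : InTri u v t s) (hsP : s ∈ P) :
    (P.filter (fun z => InTri u v s z)).card <
      (P.filter (fun z => InTri u v t z)).card := by
  classical
  have hsub : P.filter (fun z => InTri u v s z) ⊆ P.filter (fun z => InTri u v t z) := by
    intro z hz
    rw [Finset.mem_filter] at hz ⊢
    exact ⟨hz.1, inTri_trans hsT hz.2⟩
  refine Finset.card_lt_card ((Finset.ssubset_iff_of_subset hsub).2
    ⟨s, Finset.mem_filter.2 ⟨hsP, hsT⟩, ?_⟩)
  intro hmem
  exact not_inTri_self hX (Finset.mem_filter.1 hmem).2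

end CVV

/-- If `u` and `v` are mutually visible vertices with `v` in a positive
subcone of `u`, and some vertex `x` in the same subcone is visible to `u` with
bisector projection closer to `u` than that of `v`, then there is a vertex `y`
visible to both `u` and `v`, lying in the cone `Cᵢᵘ`, whose bisector
projection is strictly closer to `u` than that of `v`. -/

theorem closer_visible_vertex_in_subcone (P : Finset Pt) (S : Set (Pt × Pt))
    (hS : ValidConstraints P S) (hgp : GenPos P)
    (u v x : Pt) (hu : u ∈ P) (hv : v ∈ P) (hx : x ∈ P) (i : Fin 3)
    (hvis : Visible S u v) (hcone : inPosCone i u v)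
    (hsub : SameSubcone S u i v x) (hxvis : Visible S u x)
    (hcloser : projB i u x < projB i u v) :
    ∃ y ∈ P, y ≠ u ∧ y ≠ v ∧ Visible S u y ∧ Visible S v y ∧
      inPosCone i u y ∧ projB i u y < projB i u v := by
  classical
  have hvu : v ≠ u := hcone.1
  suffices H : ∀ n : ℕ, ∀ x', x' ∈ P → Visible S u x' → SameSubcone S u i v x' →
      projB i u x' < projB i u v →
      (P.filter (fun w => InTri u v x' w)).card ≤ n →
      ∃ y ∈ P, y ≠ u ∧ y ≠ v ∧ Visible S u y ∧ Visible S v y ∧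
        inPosCone i u y ∧ projB i u y < projB i u v by
    exact H _ x hx hxvis hsub hcloser le_rfl
  intro n
  induction n using Nat.strong_induction_on with
  | _ n IH =>
  intro x' hx'P hx'vis hsub' hclos' hcard
  have hx'u : x' ≠ u := hsub'.2.1.1
  have hx'v : x' ≠ v := by
    intro h
    rw [h] at hclos'
    exact lt_irrefl _ hclos'
  have hXuvx : crossp (v - u) (x' - u) ≠ 0 :=
    CVV.noncol_P hgp hu hv hx'P hvu.symm hx'v.symm hx'u.symm
  by_cases hvx' : Visible S v x'
  · exact ⟨x', hx'P, hx'u, hx'v, hx'vis, hvx', hsub'.2.1, hclos'⟩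
  have hgE1 := CVV.no_u_inc hS hgp hu hv hx'P hvu.symm hx'u.symm hx'v.symm hsub'
  obtain ⟨w0, hw0P, hw0T, hw0vis⟩ := CVV.genlem hS hgp hu hv hx'P hvu.symm hx'u.symm
    hx'v.symm hvis hx'vis hvx' hgE1
  -- the θ-maximal v-visible interior vertex
  have hVne : (P.filter (fun w => InTri u v x' w ∧ Visible S v w)).Nonempty :=
    ⟨w0, Finset.mem_filter.2 ⟨hw0P, hw0T, hw0vis⟩⟩
  obtain ⟨wm, hwmV, hwmax⟩ :=
    (P.filter (fun w => InTri u v x' w ∧ Visible S v w)).exists_max_image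
      (fun w => CVV.coC u v x' w / CVV.coB u v x' w) hVne
  have hwmP : wm ∈ P := (Finset.mem_filter.1 hwmV).1
  have hwmT : InTri u v x' wm := (Finset.mem_filter.1 hwmV).2.1
  have hwmvis : Visible S v wm := (Finset.mem_filter.1 hwmV).2.2
  have hsideAmb : ∀ c ∈ S, (c.1 = v ∨ c.2 = v) → ¬ ProperInter u x' c.1 c.2 := by
    intro c hc hincv
    refine CVV.prot hS hx'vis hc ?_ ?_
    · intro h
      rcases hincv with h' | h'
      · rw [h] at h'; exact hvu h'.symm
      · rw [h] at h'; exact hx'v h'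
    · intro h
      rcases hincv with h' | h'
      · rw [h] at h'; exact hx'v h'
      · rw [h] at h'; exact hvu h'.symm
  have hnbadm : ∀ c ∈ S, (c.1 = v ∨ c.2 = v) → ¬ ProperInter u wm c.1 c.2 := by
    intro c hc hincv hpi
    obtain ⟨ω, hωP, hωT, hωcon, hωsign⟩ :=
      CVV.vinc_gen hS hgp hu hv hx'P hvu.symm hx'u.symm hx'v.symm hvis hsideAmb
        hc hincv hwmP hwmT hpi
    have hωV : ω ∈ P.filter (fun w => InTri u v x' w ∧ Visible S v w) :=
      Finset.mem_filter.2 ⟨hωP, hωT, Or.inl hωcon⟩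
    have hlt := CVV.theta_lt hXuvx hwmT hωT hωsign
    exact absurd (hwmax ω hωV) (not_le.2 hlt)
  -- inner recursion over v-visible interior vertices
  have PROC : ∀ m : ℕ, ∀ w, w ∈ P → InTri u v x' w → Visible S v w →
      (∀ c ∈ S, (c.1 = v ∨ c.2 = v) → ¬ ProperInter u w c.1 c.2) →
      (P.filter (fun z => InTri u v w z)).card ≤ m →
      ∃ y ∈ P, y ≠ u ∧ y ≠ v ∧ Visible S u y ∧ Visible S v y ∧
        inPosCone i u y ∧ projB i u y < projB i u v := by
    intro m
    induction m using Nat.strong_induction_on with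
    | _ m IHm =>
    intro w hwP hwT hwVis hwnb hcard'
    obtain ⟨hwu, hwv, hwcone, hwproj, hwb, hwc, hwdec⟩ :=
      CVV.tri_props hXuvx hcone hsub'.2.1 hclos' hwT
    by_cases hvuw : Visible S u w
    · exact ⟨w, hwP, hwu, hwv, hvuw, hwVis, hwcone, hwproj⟩
    by_cases hbad : ∃ c ∈ S, (c.1 = v ∨ c.2 = v) ∧
        ∃ w' ∈ P, InTri u v w w' ∧ ProperInter u w' c.1 c.2
    · -- recurse on the θ-maximal landing vertex
      obtain ⟨c0, hc0, hinc0, w'0, hw'0P, hw'0T, hpi0⟩ := hbad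
      obtain ⟨ω0, hω0P, hω0T, hω0con, _⟩ :=
        CVV.vinc_gen hS hgp hu hv hwP hvu.symm hwu.symm hwv.symm hvis hwnb
          hc0 hinc0 hw'0P hw'0T hpi0
      have hWne : (P.filter (fun ω => InTri u v w ω ∧ IsConstraintOf S v ω)).Nonempty :=
        ⟨ω0, Finset.mem_filter.2 ⟨hω0P, hω0T, hω0con⟩⟩
      obtain ⟨ωm, hωmW, hωmax⟩ :=
        (P.filter (fun ω => InTri u v w ω ∧ IsConstraintOf S v ω)).exists_max_image
          (fun ω => CVV.coC u v x' ω / CVV.coB u v x' ω) hWne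
      have hωmP : ωm ∈ P := (Finset.mem_filter.1 hωmW).1
      have hωmT : InTri u v w ωm := (Finset.mem_filter.1 hωmW).2.1
      have hωmcon : IsConstraintOf S v ωm := (Finset.mem_filter.1 hωmW).2.2
      have hωmTamb : InTri u v x' ωm := CVV.inTri_trans hwT hωmT
      have hnbm : ∀ c ∈ S, (c.1 = v ∨ c.2 = v) → ¬ ProperInter u ωm c.1 c.2 := by
        intro c hc hincv hpi
        obtain ⟨ω2, hω2P, hω2T, hω2con, hω2sign⟩ :=
          CVV.vinc_gen hS hgp hu hv hwP hvu.symm hwu.symm hwv.symm hvis hwnb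
            hc hincv hωmP hωmT hpi
        have hω2W : ω2 ∈ P.filter (fun ω => InTri u v w ω ∧ IsConstraintOf S v ω) :=
          Finset.mem_filter.2 ⟨hω2P, hω2T, hω2con⟩
        have hω2amb : InTri u v x' ω2 := CVV.inTri_trans hwT hω2T
        have hlt := CVV.theta_lt hXuvx hωmTamb hω2amb hω2sign
        exact absurd (hωmax ω2 hω2W) (not_le.2 hlt)
      have hXuvωm : crossp (v - u) (ωm - u) ≠ 0 := by
        obtain ⟨hq1, hq2, _⟩ := CVV.inTri_ne hXuvx hωmTamb
        exact CVV.noncol_P hgp hu hv hωmP hvu.symm hq2.symm hq1.symm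
      have hmeas := CVV.card_lt (P := P) hXuvωm hωmT hωmP
      exact IHm _ (lt_of_lt_of_le hmeas hcard') ωm hωmP hωmTamb (Or.inl hωmcon)
        hnbm le_rfl
    · -- apply the key lemma in the subtriangle and recurse in the main induction
      have hgE2 : ∀ c ∈ S, (c.1 = v ∨ c.2 = v) → ∀ w',
          (w' = w ∨ (w' ∈ P ∧ InTri v u w w')) → ¬ ProperInter u w' c.1 c.2 := by
        intro c hc hincv w' hw' hpi
        rcases hw' with rfl | ⟨hw'P, hw'T⟩
        · exact hwnb c hc hincv hpi
        · exact hbad ⟨c, hc, hincv, w', hw'P, CVV.inTri_swap hw'T, hpi⟩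
      obtain ⟨s', hs'P, hs'T, hs'vis⟩ := CVV.genlem hS hgp hv hu hwP hvu hwv.symm
        hwu.symm (CVV.visible_symm hvis) hwVis hvuw hgE2
      have hs'T2 : InTri u v w s' := CVV.inTri_swap hs'T
      have hs'amb : InTri u v x' s' := CVV.inTri_trans hwT hs'T2
      obtain ⟨hs'u, hs'v, hs'cone, hs'proj, hs'b, hs'c, hs'dec⟩ :=
        CVV.tri_props hXuvx hcone hsub'.2.1 hclos' hs'amb
      have hs'sub : SameSubcone S u i v s' :=
        CVV.subcone_transfer hsub' hs'cone hs'b hs'c hs'dec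
      have hXuvs' : crossp (v - u) (s' - u) ≠ 0 :=
        CVV.noncol_P hgp hu hv hs'P hvu.symm hs'v.symm hs'u.symm
      have hmeas := CVV.card_lt (P := P) hXuvs' hs'amb hs'P
      exact IH _ (lt_of_lt_of_le hmeas hcard) s' hs'P hs'vis hs'sub hs'proj le_rfl
  exact PROC _ wm hwmP hwmT hwmvis hnbadm le_rfl
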